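/- Every ordinal maximin share for additive valuations is self-maximizing: fix n and a family F of partitions of index sets [m] into n parts; define the F-maximin share of an additive valuation v by sorting items in non-increasing v-value as e_1,...,e_m and taking s(v) = max_{P ∈ F} min_{j ∈ [n]} Σ_{i ∈ B_j} v(e_i) for P = (B_1,...,B_n). Then for all additive v, v': min{ v(S) : v(S) ≥ s(v) } ≥ min{ v(S) : v'(S) ≥ s(v') }. -/

import Mathlib

open Finset

private lemma auxCount {m : ℕ} (c a : Fin m → ℝ) (τ : Equiv.Perm (Fin m))
    (hca : ∀ i, a i = c (τ i)) (ha : ∀ i j : Fin m, i ≤ j → a j ≤ a i)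
    (j : Fin m) (V : Finset (Fin m)) (hV : (j : ℕ) + 1 ≤ V.card) :
    ∃ q ∈ V, c q ≤ a j := by
  by_contra h
  push_neg at h
  have hmem : ∀ q ∈ V, ((τ.symm q : Fin m) : ℕ) ∈ Finset.range (j : ℕ) := by
    intro q hq
    rw [Finset.mem_range]
    by_contra hge
    push_neg at hge
    have h1 : a (τ.symm q) ≤ a j := ha j (τ.symm q) (by
      rw [Fin.le_def]; omega)
    have h2 : a (τ.symm q) = c q := by rw [hca, Equiv.apply_symm_apply]
    have h3 := h q hq
    linarith
  have hcard : V.card ≤ (Finset.range (j : ℕ)).card := by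
    apply Finset.card_le_card_of_injOn (fun q => ((τ.symm q : Fin m) : ℕ)) hmem
    intro q1 _ q2 _ hval
    exact τ.symm.injective (Fin.val_injective hval)
  rw [Finset.card_range] at hcard
  omega

private lemma greedy {m : ℕ} (c a : Fin m → ℝ) (τ : Equiv.Perm (Fin m))
    (hca : ∀ i, a i = c (τ i)) (ha : ∀ i j : Fin m, i ≤ j → a j ≤ a i) :
    ∀ (k : ℕ) (pos bud : Fin k → Fin m) (U : Finset (Fin m)),
      StrictMono pos → StrictMono bud →
      (∀ t, (bud t : ℕ) + 1 ≤ ((Finset.univ.filter (fun q : Fin m => q ≤ pos t)) \ U).card) →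
      ∃ β : Fin k → Fin m, Function.Injective β ∧ (∀ t, β t ≤ pos t) ∧ (∀ t, β t ∉ U) ∧
        ∑ t, c (β t) ≤ ∑ t, a (bud t) := by
  intro k
  induction k with
  | zero =>
    intro pos bud U _ _ _
    exact ⟨fun t => t.elim0, fun t => t.elim0, fun t => t.elim0, fun t => t.elim0, by simp⟩
  | succ k ih =>
    intro pos bud U hpos hbud hinv
    set V := (Finset.univ.filter (fun q : Fin m => q ≤ pos (Fin.last k))) \ U with hVdef
    have hVcard := hinv (Fin.last k)
    have hVcard2 : (bud (Fin.last k) : ℕ) + 1 ≤ V.card := hVcard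
    have hVne : V.Nonempty := Finset.card_pos.mp (by omega)
    obtain ⟨p, hpV, hpmin⟩ := Finset.exists_min_image V c hVne
    obtain ⟨q, hqV, hq⟩ := auxCount c a τ hca ha (bud (Fin.last k)) V hVcard
    have hcp : c p ≤ a (bud (Fin.last k)) := le_trans (hpmin q hqV) hq
    have hpU : p ∉ U := (Finset.mem_sdiff.mp hpV).2
    have hple : p ≤ pos (Fin.last k) := by
      have := (Finset.mem_sdiff.mp hpV).1
      simpa using this
    set Tset := Finset.univ.filter (fun t : Fin (k+1) => p ≤ pos t) with hTdef
    have hTne : Tset.Nonempty := ⟨Fin.last k, by simp [hTdef, hple]⟩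
    set t0 := Tset.min' hTne with ht0def
    have ht0mem : p ≤ pos t0 := by
      have := Tset.min'_mem hTne
      simp only [hTdef, Finset.mem_filter] at this
      exact this.2
    have ht0min : ∀ t, t < t0 → ¬ p ≤ pos t := by
      intro t htlt hle
      exact absurd (Tset.min'_le t (by simp [hTdef, hle])) (not_le.mpr htlt)
    have hinv' : ∀ j : Fin k, (bud j.castSucc : ℕ) + 1 ≤
        ((Finset.univ.filter (fun q : Fin m => q ≤ pos (t0.succAbove j))) \ (insert p U)).card := by
      intro j
      rcases lt_or_ge j.castSucc t0 with hlt | hle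
      · rw [Fin.succAbove_of_castSucc_lt _ _ hlt]
        have hnp : p ∉ (Finset.univ.filter (fun q : Fin m => q ≤ pos j.castSucc)) \ U := by
          intro hmem
          exact ht0min _ hlt (by simpa using (Finset.mem_sdiff.mp hmem).1)
        rw [Finset.sdiff_insert, Finset.erase_eq_of_notMem hnp]
        exact hinv j.castSucc
      · rw [Fin.succAbove_of_le_castSucc _ _ hle]
        have hpX : p ∈ (Finset.univ.filter (fun q : Fin m => q ≤ pos j.succ)) \ U := by
          rw [Finset.mem_sdiff, Finset.mem_filter]
          refine ⟨⟨Finset.mem_univ _, le_trans ht0mem ?_⟩, hpU⟩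
          exact (hpos.monotone (le_of_lt (lt_of_le_of_lt hle (Fin.castSucc_lt_succ (i := j)))))
        have hcard := hinv j.succ
        have hmono : (bud j.castSucc : ℕ) < (bud j.succ : ℕ) := hbud (Fin.castSucc_lt_succ (i := j))
        rw [Finset.sdiff_insert, Finset.card_erase_of_mem hpX]
        omega
    obtain ⟨β', hβ'inj, hβ'le, hβ'U, hβ'sum⟩ :=
      ih (fun j => pos (t0.succAbove j)) (fun j => bud j.castSucc) (insert p U)
        (hpos.comp (Fin.strictMono_succAbove t0)) (hbud.comp Fin.strictMono_castSucc) hinv'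
    have hβ'np : ∀ j, β' j ≠ p := by
      intro j hj
      exact hβ'U j (by rw [hj]; exact Finset.mem_insert_self p U)
    set β : Fin (k+1) → Fin m := Fin.insertNth (α := fun _ => Fin m) t0 p β' with hβdef
    have hβsame : β t0 = p := Fin.insertNth_apply_same (α := fun _ => Fin m) t0 p β'
    have hβab : ∀ j, β (t0.succAbove j) = β' j := fun j => Fin.insertNth_apply_succAbove (α := fun _ => Fin m) t0 p β' j
    refine ⟨β, ?_, ?_, ?_, ?_⟩
    · intro t s hts
      by_cases ht : t = t0 <;> by_cases hs : s = t0
      · rw [ht, hs]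
      · subst ht
        obtain ⟨js, rfl⟩ := Fin.exists_succAbove_eq hs
        rw [hβsame, hβab] at hts
        exact absurd hts.symm (hβ'np js)
      · subst hs
        obtain ⟨jt, rfl⟩ := Fin.exists_succAbove_eq ht
        rw [hβsame, hβab] at hts
        exact absurd hts (hβ'np jt)
      · obtain ⟨jt, rfl⟩ := Fin.exists_succAbove_eq ht
        obtain ⟨js, rfl⟩ := Fin.exists_succAbove_eq hs
        rw [hβab, hβab] at hts
        rw [hβ'inj hts]
    · intro t
      by_cases ht : t = t0
      · subst ht; rw [hβsame]; exact ht0mem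
      · obtain ⟨jt, rfl⟩ := Fin.exists_succAbove_eq ht
        rw [hβab]
        exact hβ'le jt
    · intro t
      by_cases ht : t = t0
      · subst ht; rw [hβsame]; exact hpU
      · obtain ⟨jt, rfl⟩ := Fin.exists_succAbove_eq ht
        rw [hβab]
        intro hU
        exact hβ'U jt (Finset.mem_insert_of_mem hU)
    · have h1 : ∑ t, c (β t) = c (β t0) + ∑ j : Fin k, c (β (t0.succAbove j)) :=
        Fin.sum_univ_succAbove (fun t => c (β t)) t0
      have h2 : ∑ t, a (bud t) = (∑ j : Fin k, a (bud j.castSucc)) + a (bud (Fin.last k)) :=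
        Fin.sum_univ_castSucc (fun t => a (bud t))
      rw [h1, h2, hβsame]
      have h3 : ∑ j : Fin k, c (β (t0.succAbove j)) = ∑ j : Fin k, c (β' j) := by
        apply Finset.sum_congr rfl
        intro j _
        rw [hβab]
      rw [h3]
      linarith


/-- Every ordinal maximin share for additive valuations is self-maximizing.
Here `F` is a family of partitions of the index set `Fin m` into `n` parts; the
`F`-maximin share of an additive valuation with item values `w`, with items enumerated
in non-increasing value order by `σ`, is
`s(w) = sup { x | ∃ P ∈ F, every part of P (read through σ) has value ≥ x }`.
The conclusion states that the implied guarantee with any report `w'` is at most the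
truthful share guarantee. -/
theorem ordinal_maximin_share_self_maximizing {M : Type*} [Fintype M] [DecidableEq M]
    {n m : ℕ} (F : Set (Fin n → Finset (Fin m)))
    (hF : ∀ P ∈ F, (∀ i j, i ≠ j → Disjoint (P i) (P j)) ∧
      Finset.univ.biUnion P = Finset.univ)
    (w w' : M → ℝ) (hw : ∀ e, 0 ≤ w e) (hw' : ∀ e, 0 ≤ w' e)
    (σ σ' : Fin m ≃ M)
    (hσ : ∀ i j : Fin m, i ≤ j → w (σ j) ≤ w (σ i))
    (hσ' : ∀ i j : Fin m, i ≤ j → w' (σ' j) ≤ w' (σ' i)) :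
    sInf ((fun S : Finset M => ∑ e ∈ S, w e) ''
        {S : Finset M |
          sSup {x : ℝ | ∃ P ∈ F, ∀ j : Fin n, x ≤ ∑ i ∈ P j, w' (σ' i)}
            ≤ ∑ e ∈ S, w' e})
      ≤ sInf ((fun S : Finset M => ∑ e ∈ S, w e) ''
        {S : Finset M |
          sSup {x : ℝ | ∃ P ∈ F, ∀ j : Fin n, x ≤ ∑ i ∈ P j, w (σ i)}
            ≤ ∑ e ∈ S, w e}) := by
  classical
  rcases Nat.eq_zero_or_pos n with hn | hn
  · subst hn
    have hsup0 : ∀ (v : M → ℝ) (ρ : Fin m ≃ M),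
        sSup {x : ℝ | ∃ P ∈ F, ∀ j : Fin 0, x ≤ ∑ i ∈ P j, v (ρ i)} = 0 := by
      intro v ρ
      rcases Set.eq_empty_or_nonempty F with hFe | ⟨P0, hP0⟩
      · rw [show {x : ℝ | ∃ P ∈ F, ∀ j : Fin 0, x ≤ ∑ i ∈ P j, v (ρ i)} = ∅ by
          simp [hFe]]
        exact Real.sSup_empty
      · rw [show {x : ℝ | ∃ P ∈ F, ∀ j : Fin 0, x ≤ ∑ i ∈ P j, v (ρ i)} = Set.univ by
          ext x; simp only [Set.mem_setOf_eq, Set.mem_univ, iff_true]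
          exact ⟨P0, hP0, fun j => j.elim0⟩]
        exact Real.sSup_univ
    rw [hsup0 w' σ', hsup0 w σ]
    have h1 : {S : Finset M | (0:ℝ) ≤ ∑ e ∈ S, w' e} = Set.univ :=
      Set.eq_univ_of_forall fun S => Finset.sum_nonneg fun e _ => hw' e
    have h2 : {S : Finset M | (0:ℝ) ≤ ∑ e ∈ S, w e} = Set.univ :=
      Set.eq_univ_of_forall fun S => Finset.sum_nonneg fun e _ => hw e
    rw [h1, h2]
  · have j0 : Fin n := ⟨0, hn⟩
    have hbddA : BddBelow ((fun S : Finset M => ∑ e ∈ S, w e) ''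
        {S : Finset M |
          sSup {x : ℝ | ∃ P ∈ F, ∀ j : Fin n, x ≤ ∑ i ∈ P j, w' (σ' i)}
            ≤ ∑ e ∈ S, w' e}) := by
      refine ⟨0, ?_⟩
      rintro r ⟨S, _, rfl⟩
      exact Finset.sum_nonneg fun e _ => hw e
    have hwitness : sSup {x : ℝ | ∃ P ∈ F, ∀ j : Fin n, x ≤ ∑ i ∈ P j, w (σ i)}
        ≤ ∑ e ∈ (Finset.univ : Finset M), w e := by
      apply Real.sSup_le
      · rintro x ⟨P, hP, hx⟩
        calc x ≤ ∑ i ∈ P j0, w (σ i) := hx j0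
        _ ≤ ∑ i : Fin m, w (σ i) :=
          Finset.sum_le_sum_of_subset_of_nonneg (Finset.subset_univ _)
            (fun i _ _ => hw (σ i))
        _ = ∑ e, w e := Equiv.sum_comp σ w
      · exact Finset.sum_nonneg fun e _ => hw e
    refine le_csInf ⟨∑ e ∈ (Finset.univ : Finset M), w e,
      ⟨Finset.univ, hwitness, rfl⟩⟩ ?_
    rintro b ⟨S, hS, rfl⟩
    simp only [Set.mem_setOf_eq] at hS
    rcases Set.eq_empty_or_nonempty F with hFe | ⟨P0, hP0⟩
    · have h1 : {x : ℝ | ∃ P ∈ F, ∀ j : Fin n, x ≤ ∑ i ∈ P j, w' (σ' i)} = ∅ := by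
        simp [hFe]
      have h2 : sInf ((fun S : Finset M => ∑ e ∈ S, w e) ''
          {S : Finset M |
            sSup {x : ℝ | ∃ P ∈ F, ∀ j : Fin n, x ≤ ∑ i ∈ P j, w' (σ' i)}
              ≤ ∑ e ∈ S, w' e}) ≤ ∑ e ∈ (∅ : Finset M), w e := by
        refine csInf_le hbddA ⟨∅, ?_, rfl⟩
        simp only [Set.mem_setOf_eq, h1, Real.sSup_empty, Finset.sum_empty, le_refl]
      refine le_trans h2 ?_
      simp only [Finset.sum_empty]
      exact Finset.sum_nonneg fun e _ => hw e
    · -- main case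
      set g' : (Fin n → Finset (Fin m)) → ℝ :=
        fun P => (Finset.univ : Finset (Fin n)).inf' ⟨j0, Finset.mem_univ _⟩
          (fun j => ∑ i ∈ P j, w' (σ' i)) with hg'def
      obtain ⟨Pstar, hPstarF, hPstarMax⟩ :=
        Finset.exists_max_image F.toFinite.toFinset g'
          ⟨P0, (Set.Finite.mem_toFinset _).mpr hP0⟩
      have hPstarF' : Pstar ∈ F := (Set.Finite.mem_toFinset _).mp hPstarF
      have hs' : sSup {x : ℝ | ∃ P ∈ F, ∀ j : Fin n, x ≤ ∑ i ∈ P j, w' (σ' i)}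
          ≤ g' Pstar := by
        apply Real.sSup_le
        · rintro x ⟨P, hP, hx⟩
          refine le_trans (Finset.le_inf' _ _ fun j _ => hx j)
            (hPstarMax P ((Set.Finite.mem_toFinset _).mpr hP))
        · exact Finset.le_inf' _ _ fun j _ =>
            Finset.sum_nonneg fun i _ => hw' (σ' i)
      obtain ⟨j1, _, hj1⟩ := Finset.exists_min_image (Finset.univ : Finset (Fin n))
        (fun j => ∑ i ∈ Pstar j, w (σ i)) ⟨j0, Finset.mem_univ _⟩
      have hbddX : BddAbove {x : ℝ | ∃ P ∈ F, ∀ j : Fin n, x ≤ ∑ i ∈ P j, w (σ i)} := by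
        refine ⟨∑ i : Fin m, w (σ i), ?_⟩
        rintro x ⟨P, hP, hx⟩
        exact le_trans (hx j0)
          (Finset.sum_le_sum_of_subset_of_nonneg (Finset.subset_univ _)
            (fun i _ _ => hw (σ i)))
      have hv0 : (∑ i ∈ Pstar j1, w (σ i))
          ≤ sSup {x : ℝ | ∃ P ∈ F, ∀ j : Fin n, x ≤ ∑ i ∈ P j, w (σ i)} :=
        le_csSup hbddX ⟨Pstar, hPstarF', fun j => hj1 j (Finset.mem_univ _)⟩
      set R : Finset (Fin m) := Pstar j1 with hRdef
      set k : ℕ := R.card with hkdef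
      set eiso := R.orderIsoOfFin rfl with heisodef
      set pos : Fin k → Fin m := fun t => (eiso t : Fin m) with hposdef
      have hposmono : StrictMono pos :=
        fun t s h => Subtype.coe_lt_coe.mpr (eiso.strictMono h)
      have hposinj : Function.Injective pos :=
        fun t s h => eiso.injective (Subtype.coe_injective h)
      have hRimage : R = Finset.image pos Finset.univ := by
        ext i
        simp only [Finset.mem_image, Finset.mem_univ, true_and]
        constructor
        · intro hi
          exact ⟨eiso.symm ⟨i, hi⟩, by simp [hposdef]⟩
        · rintro ⟨t, rfl⟩
          exact (eiso t).2
      have hRsum : ∀ f : Fin m → ℝ, ∑ i ∈ R, f i = ∑ t : Fin k, f (pos t) := by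
        intro f
        rw [hRimage, Finset.sum_image (fun a _ b _ h => hposinj h)]
      have hca : ∀ i, (fun i => w (σ i)) i = (fun p => w (σ' p)) ((σ.trans σ'.symm) i) := by
        intro i
        simp only [Equiv.trans_apply, Equiv.apply_symm_apply]
      obtain ⟨β, hβinj, hβle, _, hβsum⟩ :=
        greedy (fun p => w (σ' p)) (fun i => w (σ i)) (σ.trans σ'.symm) hca hσ
          k pos pos ∅ hposmono hposmono (by
            intro t
            rw [Finset.sdiff_empty]
            rw [show Finset.univ.filter (fun q : Fin m => q ≤ pos t) = Finset.Iic (pos t) by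
              ext q; simp]
            rw [Fin.card_Iic])
      set T : Finset M := Finset.image (fun t => σ' (β t)) Finset.univ with hTdef
      have hTinj : Function.Injective (fun t : Fin k => σ' (β t)) :=
        fun t s h => hβinj (σ'.injective h)
      have hTsum : ∀ u : M → ℝ, ∑ e ∈ T, u e = ∑ t : Fin k, u (σ' (β t)) := by
        intro u
        rw [hTdef, Finset.sum_image (fun a _ b _ h => hTinj h)]
      have hTmem : sSup {x : ℝ | ∃ P ∈ F, ∀ j : Fin n, x ≤ ∑ i ∈ P j, w' (σ' i)}
          ≤ ∑ e ∈ T, w' e := by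
        rw [hTsum w']
        calc sSup {x : ℝ | ∃ P ∈ F, ∀ j : Fin n, x ≤ ∑ i ∈ P j, w' (σ' i)}
            ≤ g' Pstar := hs'
        _ ≤ ∑ i ∈ Pstar j1, w' (σ' i) := Finset.inf'_le _ (Finset.mem_univ j1)
        _ = ∑ t : Fin k, w' (σ' (pos t)) := hRsum (fun i => w' (σ' i))
        _ ≤ ∑ t : Fin k, w' (σ' (β t)) :=
          Finset.sum_le_sum (fun t _ => hσ' (β t) (pos t) (hβle t))
      calc sInf ((fun S : Finset M => ∑ e ∈ S, w e) ''
          {S : Finset M |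
            sSup {x : ℝ | ∃ P ∈ F, ∀ j : Fin n, x ≤ ∑ i ∈ P j, w' (σ' i)}
              ≤ ∑ e ∈ S, w' e}) ≤ ∑ e ∈ T, w e := csInf_le hbddA ⟨T, hTmem, rfl⟩
      _ = ∑ t : Fin k, w (σ' (β t)) := hTsum w
      _ ≤ ∑ t : Fin k, w (σ (pos t)) := hβsum
      _ = ∑ i ∈ R, w (σ i) := (hRsum (fun i => w (σ i))).symm
      _ ≤ sSup {x : ℝ | ∃ P ∈ F, ∀ j : Fin n, x ≤ ∑ i ∈ P j, w (σ i)} := hv0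
      _ ≤ ∑ e ∈ S, w e := hS
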